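/- Let G be a finite group with normal subgroups N ≤ M ≤ G such that: the conjugacy class of every x ∈ G ∖ M equals the coset xM; the conjugacy class of every x ∈ M ∖ N equals the coset xN; and the conjugacy class of every x ∈ N is the singleton {x}. Then G satisfies the unique intersection number condition: for every pair of distinct conjugacy classes C_h ≠ C_i of G there is exactly one conjugacy class C_j with C_h ∩ C_iC_j ≠ ∅. -/
import Mathlib


open Pointwise

/-- A group `G` satisfies the *unique intersection number condition* (condition (3) of
Tanaka's theorem, equivalent to the Terwilliger algebra of the group association scheme of `G`
being almost commutative) if for every pair of distinct conjugacy classes `Ch ≠ Ci` of `G`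
there is exactly one conjugacy class `Cj` with `Ch ∩ (Ci * Cj) ≠ ∅`. -/
def UniqueIntersectionNumberCondition (G : Type*) [Group G] : Prop :=
  ∀ Ch Ci : ConjClasses G, Ch ≠ Ci →
    ∃! Cj : ConjClasses G, (Ch.carrier ∩ (Ci.carrier * Cj.carrier)).Nonempty

section Aux

variable {G : Type*} [Group G]

lemma myCarrierMk (a : G) : (ConjClasses.mk a).carrier = conjugatesOf a := rfl

lemma myInvCoset (K : Subgroup G) [K.Normal] (b : G) :
    (b • (K : Set G))⁻¹ = b⁻¹ • (K : Set G) := by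
  ext z
  simp only [Set.mem_inv, Set.mem_smul_set, smul_eq_mul]
  constructor
  · rintro ⟨k, hk, hzk⟩
    refine ⟨b * k⁻¹ * b⁻¹, Subgroup.Normal.conj_mem ‹K.Normal› _ (inv_mem hk) b, ?_⟩
    have : z = k⁻¹ * b⁻¹ := by
      have := congrArg (·⁻¹) hzk; simp only [mul_inv_rev, inv_inv] at this; exact this.symm
    rw [this]; group
  · rintro ⟨k, hk, hzk⟩
    refine ⟨b⁻¹ * k⁻¹ * b, ?_, ?_⟩
    · simpa using Subgroup.Normal.conj_mem ‹K.Normal› _ (inv_mem hk) b⁻¹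
    · rw [← hzk]; group

lemma myCosetMul (A B : Subgroup G) [A.Normal] (x y : G) :
    (x • (A : Set G)) * (y • (B : Set G)) = (x * y) • ((A : Set G) * (B : Set G)) := by
  ext z
  simp only [Set.mem_mul, Set.mem_smul_set, smul_eq_mul]
  constructor
  · rintro ⟨p, ⟨a, ha, rfl⟩, q, ⟨b, hb, rfl⟩, rfl⟩
    refine ⟨(y⁻¹ * a * y) * b, ⟨y⁻¹ * a * y, ?_, b, hb, rfl⟩, by group⟩
    simpa using Subgroup.Normal.conj_mem ‹A.Normal› _ ha y⁻¹
  · rintro ⟨w, ⟨a, ha, b, hb, rfl⟩, rfl⟩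
    exact ⟨x * (y * a * y⁻¹), ⟨y * a * y⁻¹, Subgroup.Normal.conj_mem ‹A.Normal› _ ha y, rfl⟩,
      y * b, ⟨b, hb, rfl⟩, by group⟩

lemma myMulLe {A B : Subgroup G} (h : A ≤ B) : (A : Set G) * (B : Set G) = (B : Set G) := by
  ext z
  simp only [Set.mem_mul, SetLike.mem_coe]
  constructor
  · rintro ⟨a, ha, b, hb, rfl⟩; exact mul_mem (h ha) hb
  · intro hz; exact ⟨1, one_mem A, z, hz, one_mul z⟩

lemma myMulGe {A B : Subgroup G} (h : B ≤ A) : (A : Set G) * (B : Set G) = (A : Set G) := by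
  ext z
  simp only [Set.mem_mul, SetLike.mem_coe]
  constructor
  · rintro ⟨a, ha, b, hb, rfl⟩; exact mul_mem ha (h hb)
  · intro hz; exact ⟨z, hz, 1, one_mem B, mul_one z⟩

lemma mySingleton (a : G) : a • (((⊥ : Subgroup G)) : Set G) = {a} := by
  rw [Subgroup.coe_bot, Set.smul_set_singleton, smul_eq_mul, mul_one]

lemma myKey (N M : Subgroup G) [N.Normal] [M.Normal] (hNM : N ≤ M)
    (hM : ∀ x : G, x ∉ M → conjugatesOf x = x • (M : Set G))
    (hN : ∀ x ∈ M, x ∉ N → conjugatesOf x = x • (N : Set G))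
    (hZ : ∀ x ∈ N, conjugatesOf x = {x})
    (a b : G) (hne : ConjClasses.mk a ≠ ConjClasses.mk b) :
    (conjugatesOf b)⁻¹ * conjugatesOf a = conjugatesOf (b⁻¹ * a) := by
  have hconj : ∀ x y : G, x ∈ y • (conjugatesOf y) → False → True := fun _ _ _ _ => trivial
  -- helper: if a ∈ conjugatesOf b then mk a = mk b
  have hmem : a ∉ conjugatesOf b := by
    intro h
    exact hne ((ConjClasses.mk_eq_mk_iff_isConj.mpr h).symm)
  have main : ∃ Ka Kb K : Subgroup G, ∃ _ : Kb.Normal,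
      conjugatesOf a = a • (Ka : Set G) ∧ conjugatesOf b = b • (Kb : Set G) ∧
      (Kb : Set G) * (Ka : Set G) = (K : Set G) ∧
      conjugatesOf (b⁻¹ * a) = (b⁻¹ * a) • (K : Set G) := by
    by_cases ha1 : a ∈ M
    · by_cases hb1 : b ∈ M
      · by_cases ha2 : a ∈ N
        · by_cases hb2 : b ∈ N
          · -- a ∈ N, b ∈ N
            refine ⟨⊥, ⊥, ⊥, inferInstance, ?_, ?_, myMulLe le_rfl, ?_⟩
            · rw [hZ a ha2, mySingleton]
            · rw [hZ b hb2, mySingleton]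
            · rw [hZ _ (mul_mem (inv_mem hb2) ha2), mySingleton]
          · -- a ∈ N, b ∈ M \ N
            refine ⟨⊥, N, N, inferInstance, ?_, hN b hb1 hb2, myMulGe bot_le, ?_⟩
            · rw [hZ a ha2, mySingleton]
            · refine hN _ (mul_mem (inv_mem hb1) ha1) ?_
              intro h
              exact hb2 (by simpa using inv_mem (mul_mem h (inv_mem ha2)) : b ∈ N)
        · by_cases hb2 : b ∈ N
          · -- a ∈ M \ N, b ∈ N
            refine ⟨N, ⊥, N, inferInstance, hN a ha1 ha2, ?_, myMulLe bot_le, ?_⟩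
            · rw [hZ b hb2, mySingleton]
            · refine hN _ (mul_mem (inv_mem hb1) ha1) ?_
              intro h
              exact ha2 (by simpa using mul_mem hb2 h : a ∈ N)
          · -- a ∈ M \ N, b ∈ M \ N
            refine ⟨N, N, N, inferInstance, hN a ha1 ha2, hN b hb1 hb2,
              myMulLe le_rfl, ?_⟩
            refine hN _ (mul_mem (inv_mem hb1) ha1) ?_
            intro h
            apply hmem
            rw [hN b hb1 hb2]
            exact ⟨b⁻¹ * a, h, by simp [smul_eq_mul, mul_inv_cancel_left]⟩
      · -- b ∉ M
        have hba : b⁻¹ * a ∉ M := by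
          intro h
          exact hb1 (by simpa using inv_mem (mul_mem h (inv_mem ha1)) : b ∈ M)
        by_cases ha2 : a ∈ N
        · exact ⟨⊥, M, M, inferInstance, by rw [hZ a ha2, mySingleton], hM b hb1,
            myMulGe bot_le, hM _ hba⟩
        · exact ⟨N, M, M, inferInstance, hN a ha1 ha2, hM b hb1,
            myMulGe hNM, hM _ hba⟩
    · by_cases hb1 : b ∈ M
      · -- a ∉ M, b ∈ M
        have hba : b⁻¹ * a ∉ M := by
          intro h
          exact ha1 (by simpa using mul_mem hb1 h : a ∈ M)
        by_cases hb2 : b ∈ N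
        · exact ⟨M, ⊥, M, inferInstance, hM a ha1, by rw [hZ b hb2, mySingleton],
            myMulLe bot_le, hM _ hba⟩
        · exact ⟨M, N, M, inferInstance, hM a ha1, hN b hb1 hb2,
            myMulLe hNM, hM _ hba⟩
      · -- a ∉ M, b ∉ M
        refine ⟨M, M, M, inferInstance, hM a ha1, hM b hb1, myMulLe le_rfl, ?_⟩
        refine hM _ ?_
        intro h
        apply hmem
        rw [hM b hb1]
        exact ⟨b⁻¹ * a, h, by simp [smul_eq_mul, mul_inv_cancel_left]⟩
  obtain ⟨Ka, Kb, K, hKbn, hca, hcb, hprod, hcba⟩ := main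
  haveI := hKbn
  rw [hca, hcb, hcba, myInvCoset, myCosetMul, hprod]

end Aux

/-- Let `G` be a finite group with normal subgroups `N ≤ M ≤ G` such that the conjugacy class
of every `x ∈ G ∖ M` is `xM`, the conjugacy class of every `x ∈ M ∖ N` is `xN`, and every
element of `N` is central. Then `G` satisfies the unique intersection number condition. -/
theorem three_level_uniqueIntersectionNumberCondition (G : Type*) [Group G] [Finite G]
    (N M : Subgroup G) [N.Normal] [M.Normal] (hNM : N ≤ M)
    (hM : ∀ x : G, x ∉ M → conjugatesOf x = x • (M : Set G))
    (hN : ∀ x ∈ M, x ∉ N → conjugatesOf x = x • (N : Set G))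
    (hZ : ∀ x ∈ N, conjugatesOf x = {x}) :
    UniqueIntersectionNumberCondition G := by
  intro Ch Ci hne
  obtain ⟨a, rfl⟩ := ConjClasses.exists_rep Ch
  obtain ⟨b, rfl⟩ := ConjClasses.exists_rep Ci
  have hkey := myKey N M hNM hM hN hZ a b hne
  refine ⟨ConjClasses.mk (b⁻¹ * a), ?_, ?_⟩
  · -- existence
    have hz : (b⁻¹ * a) ∈ (conjugatesOf b)⁻¹ * conjugatesOf a := by
      rw [hkey]; exact mem_conjugatesOf_self
    obtain ⟨p, hp, q, hq, hpq⟩ := hz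
    rw [Set.mem_inv] at hp
    refine ⟨q, hq, p⁻¹, hp, b⁻¹ * a, mem_conjugatesOf_self, ?_⟩
    rw [← hpq]; group
  · -- uniqueness
    rintro Cj ⟨x, hxh, hxi⟩
    obtain ⟨c, hc, d, hd, hcd⟩ := hxi
    have hdmem : d ∈ conjugatesOf (b⁻¹ * a) := by
      rw [← hkey]
      refine ⟨c⁻¹, by rwa [Set.mem_inv, inv_inv], x, hxh, by rw [← hcd]; group⟩
    have h1 : ConjClasses.mk d = ConjClasses.mk (b⁻¹ * a) :=
      ((ConjClasses.mk_eq_mk_iff_isConj).mpr (IsConj.symm hdmem))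
    have h2 : ConjClasses.mk d = Cj := ConjClasses.mem_carrier_iff_mk_eq.mp hd
    rw [← h2, h1]
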